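/- arXiv:2505.11853 — 2 statements merged into one kernel-verified Lean document; each statement's English description precedes it below -/
import Mathlib

section
/- Let σ² > 0, let a ∈ ℝ, let (Ω, P) be a probability space, and let b : Ω → ℝ be measurable with ∫ (a − b(ω))² dP(ω) < ∞. Let ν be the Gaussian mixture measure on ℝ defined by ν(A) = ∫ N(b(ω), σ²)(A) dP(ω). Then D_KL( N(a, σ²) ‖ ν ) ≤ ∫ (a − b(ω))² / (2σ²) dP(ω), where N(m, σ²) denotes the Gaussian measure on ℝ with mean m and variance σ². -/
open MeasureTheory ProbabilityTheory
open scoped ENNReal ProbabilityTheory Classical NNReal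

/-- The Kullback–Leibler divergence `D_KL(μ‖ν)`, with values in the extended
nonnegative reals: `∫ log (dμ/dν) dμ` if `μ ≪ ν` and the integral exists,
and `+∞` otherwise. -/
noncomputable def klDiv {α : Type*} [MeasurableSpace α] (μ ν : Measure α) : ℝ≥0∞ :=
  if μ ≪ ν ∧ Integrable (llr μ ν) μ then ENNReal.ofReal (∫ x, llr μ ν x ∂μ) else ∞

open Real

lemma gauss_withDensity (a : ℝ) {v : ℝ≥0} (hv : v ≠ 0) :
    gaussianReal a v = (volume : Measure ℝ).withDensity
      (fun x => ENNReal.ofReal (gaussianPDFReal a v x)) := by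
  rw [gaussianReal_of_var_ne_zero a hv]; rfl

lemma integrable_gaussian_of (a : ℝ) {v : ℝ≥0} (hv : v ≠ 0) {g : ℝ → ℝ}
    (h : Integrable (fun x => g x * gaussianPDFReal a v x) volume) :
    Integrable g (gaussianReal a v) := by
  rw [gauss_withDensity a hv, integrable_withDensity_iff]
  · refine h.congr (Filter.Eventually.of_forall fun x => ?_)
    simp only
    rw [ENNReal.toReal_ofReal (gaussianPDFReal_nonneg a v x)]
  · exact (measurable_gaussianPDFReal a v).ennreal_ofReal
  · exact Filter.Eventually.of_forall fun x => ENNReal.ofReal_lt_top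

lemma integrable_mul_gauss_pdf (a : ℝ) {v : ℝ≥0} (hv : v ≠ 0) (n : ℕ) :
    Integrable (fun x => (x - a) ^ n * gaussianPDFReal a v x) volume := by
  have hv' : (0:ℝ) < v := lt_of_le_of_ne (v.coe_nonneg) (by exact_mod_cast (Ne.symm hv))
  have hbpos : (0:ℝ) < (2 * (v:ℝ))⁻¹ := by positivity
  have h0 : Integrable
      (fun y : ℝ => y ^ n * ((√(2 * π * v))⁻¹ * rexp (- (2*(v:ℝ))⁻¹ * y ^ 2))) volume := by
    have := (integrable_rpow_mul_exp_neg_mul_sq hbpos (s := (n:ℝ)) (by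
      have : (0:ℝ) ≤ n := Nat.cast_nonneg n
      linarith)).const_mul (√(2 * π * v))⁻¹
    refine this.congr (Filter.Eventually.of_forall fun y => ?_)
    simp only
    rw [Real.rpow_natCast]; ring
  have := h0.comp_sub_right a
  refine this.congr (Filter.Eventually.of_forall fun x => ?_)
  simp only [gaussianPDFReal]
  rw [neg_div]
  congr 2
  rw [div_eq_inv_mul, neg_mul]

lemma integrable_sub_sq_gaussian (a : ℝ) {v : ℝ≥0} (hv : v ≠ 0) :
    Integrable (fun x => (x - a) ^ 2) (gaussianReal a v) :=
  integrable_gaussian_of a hv (integrable_mul_gauss_pdf a hv 2)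

lemma integrable_sub_gaussian (a : ℝ) {v : ℝ≥0} (hv : v ≠ 0) :
    Integrable (fun x => x - a) (gaussianReal a v) := by
  refine Integrable.mono' ((integrable_sub_sq_gaussian a hv).add (integrable_const 1))
    ((measurable_id.sub_const a).aestronglyMeasurable)
    (Filter.Eventually.of_forall fun x => ?_)
  rw [Real.norm_eq_abs]
  simp only [Pi.add_apply]
  nlinarith [abs_nonneg (x - a), sq_abs (x - a), sq_nonneg (|x - a| - 1)]

lemma integral_sub_gaussian (a : ℝ) {v : ℝ≥0} (hv : v ≠ 0) :
    ∫ x, (x - a) ∂(gaussianReal a v) = 0 := by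
  rw [gauss_withDensity a hv]
  have hmeas : Measurable fun x => (gaussianPDFReal a v x).toNNReal :=
    (measurable_gaussianPDFReal a v).real_toNNReal
  have : (fun x => ENNReal.ofReal (gaussianPDFReal a v x))
      = fun x => ((gaussianPDFReal a v x).toNNReal : ℝ≥0∞) := rfl
  rw [this, integral_withDensity_eq_integral_smul hmeas]
  have heq : ∀ x : ℝ, (gaussianPDFReal a v x).toNNReal • (x - a)
      = (fun y => y * gaussianPDFReal a v (y + a)) (x - a) := by
    intro x
    simp only [NNReal.smul_def, smul_eq_mul]
    rw [Real.coe_toNNReal _ (gaussianPDFReal_nonneg a v x), sub_add_cancel, mul_comm]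
  rw [integral_congr_ae (Filter.Eventually.of_forall heq),
    integral_sub_right_eq_self (fun y => y * gaussianPDFReal a v (y + a)) a]
  set F : ℝ → ℝ := fun y => y * gaussianPDFReal a v (y + a) with hF
  have hodd : ∀ y, F (-y) = - F y := by
    intro y
    simp only [hF, gaussianPDFReal]
    rw [show -y + a - a = -(y + a - a) by ring, neg_sq]
    ring
  have hemb : MeasurableEmbedding fun x : ℝ => -x :=
    (Homeomorph.neg ℝ).isClosedEmbedding.measurableEmbedding
  have hswap : ∫ y, F y = ∫ y, F (-y) := by
    conv_lhs => rw [← Measure.map_neg_eq_self (volume : Measure ℝ)]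
    exact hemb.integral_map F
  have h2 : ∫ y, F (-y) = - ∫ y, F y := by
    calc ∫ y, F (-y) = ∫ y, -F y := by simp only [hodd]
    _ = - ∫ y, F y := integral_neg F
  have : ∫ y, F y = - ∫ y, F y := hswap.trans h2
  linarith

lemma log_gaussianPDFReal (m x : ℝ) {v : ℝ≥0} (hv : v ≠ 0) :
    Real.log (gaussianPDFReal m v x)
      = -Real.log (√(2 * π * v)) - (x - m) ^ 2 / (2 * v) := by
  have hv' : (0:ℝ) < v := lt_of_le_of_ne (v.coe_nonneg) (by exact_mod_cast (Ne.symm hv))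
  have hs : (0:ℝ) < √(2 * π * v) := Real.sqrt_pos.mpr (by positivity)
  rw [gaussianPDFReal, Real.log_mul (inv_ne_zero hs.ne') (Real.exp_ne_zero _),
    Real.log_inv, Real.log_exp]
  ring

lemma gaussianPDFReal_le (m x : ℝ) (v : ℝ≥0) :
    gaussianPDFReal m v x ≤ (√(2 * π * v))⁻¹ := by
  rw [gaussianPDFReal]
  have h1 : rexp (-(x - m) ^ 2 / (2 * v)) ≤ 1 := by
    rw [Real.exp_le_one_iff]
    rcases eq_or_ne v 0 with h | h
    · simp [h]
    · have hv' : (0:ℝ) < v := lt_of_le_of_ne (v.coe_nonneg) (by exact_mod_cast (Ne.symm h))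
      have : (0:ℝ) ≤ (x - m) ^ 2 / (2 * v) := by positivity
      rw [neg_div]
      linarith
  have h2 : (0:ℝ) ≤ (√(2 * π * v))⁻¹ := by positivity
  calc (√(2 * π * v))⁻¹ * rexp (-(x - m) ^ 2 / (2 * v)) ≤ (√(2 * π * v))⁻¹ * 1 :=
        mul_le_mul_of_nonneg_left h1 h2
  _ = (√(2 * π * v))⁻¹ := mul_one _

/-- One-dimensional per-step bound: for a variance `σ² = v > 0`, a mean `a ∈ ℝ`, and a
Gaussian mixture `ν(A) = ∫ N(b(ω), σ²)(A) dP(ω)`, one has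
`D_KL(N(a, σ²) ‖ ν) ≤ ∫ (a − b(ω))² / (2σ²) dP(ω)`. -/
theorem klDiv_gaussian_mixture_le
    (v : ℝ≥0) (hv : 0 < v) (a : ℝ)
    {Ω : Type*} [MeasurableSpace Ω] (P : Measure Ω) [IsProbabilityMeasure P]
    (b : Ω → ℝ) (hb : Measurable b)
    (hint : Integrable (fun ω => (a - b ω) ^ 2) P) :
    klDiv (gaussianReal a v) (P.bind fun ω => gaussianReal (b ω) v)
      ≤ ENNReal.ofReal (∫ ω, (a - b ω) ^ 2 / (2 * (v : ℝ)) ∂P) := by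
  have hv0 : v ≠ 0 := hv.ne'
  have hv' : (0:ℝ) < v := lt_of_le_of_ne (v.coe_nonneg) (by exact_mod_cast (Ne.symm hv0))
  set μ : Measure ℝ := gaussianReal a v with hμ
  set ν : Measure ℝ := P.bind fun ω => gaussianReal (b ω) v with hν
  -- product measurability of the pdf family
  have hGm : Measurable (fun p : Ω × ℝ => gaussianPDFReal (b p.1) v p.2) := by
    unfold gaussianPDFReal
    exact ((((measurable_snd.sub (hb.comp measurable_fst)).pow_const 2).neg.div_const
      _).exp.const_mul _)
  -- the mixture density
  set gr : ℝ → ℝ := fun x => ∫ ω, gaussianPDFReal (b ω) v x ∂P with hgr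
  have hgr_sm : StronglyMeasurable gr :=
    hGm.stronglyMeasurable.integral_prod_left'
  have hGint : ∀ x : ℝ, Integrable (fun ω => gaussianPDFReal (b ω) v x) P := by
    intro x
    refine Integrable.mono' (integrable_const ((√(2 * π * v))⁻¹))
      (hGm.comp (measurable_id.prodMk measurable_const)).aestronglyMeasurable
      (Filter.Eventually.of_forall fun ω => ?_)
    rw [Real.norm_eq_abs, abs_of_nonneg (gaussianPDFReal_nonneg _ _ _)]
    exact gaussianPDFReal_le _ _ _
  have hgr_pos : ∀ x : ℝ, 0 < gr x := by
    intro x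
    rw [hgr]
    rw [integral_pos_iff_support_of_nonneg
      (fun ω => gaussianPDFReal_nonneg _ _ _) (hGint x)]
    have : (Function.support fun ω => gaussianPDFReal (b ω) v x) = Set.univ := by
      ext ω; simp [Function.support, (gaussianPDFReal_pos (b ω) v x hv0).ne']
    rw [this]
    simp
  have hgr_le : ∀ x : ℝ, gr x ≤ (√(2 * π * v))⁻¹ := by
    intro x
    calc gr x ≤ ∫ _ω, (√(2 * π * v))⁻¹ ∂P :=
          integral_mono (hGint x) (integrable_const _)
            (fun ω => gaussianPDFReal_le _ _ _)
    _ = (√(2 * π * v))⁻¹ := by simp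
  -- kernel measurability
  have hker : Measurable fun ω => gaussianReal (b ω) v := by
    refine Measure.measurable_of_measurable_coe _ fun s hs => ?_
    simp_rw [gaussianReal_apply _ hv0 s]
    exact Measurable.lintegral_prod_right' (f := fun p : Ω × ℝ => gaussianPDF (b p.1) v p.2)
      hGm.ennreal_ofReal
  have hgE : ∀ x : ℝ, ∫⁻ ω, gaussianPDF (b ω) v x ∂P = ENNReal.ofReal (gr x) := by
    intro x
    simp only [gaussianPDF]
    exact (ofReal_integral_eq_lintegral_ofReal (hGint x)
      (Filter.Eventually.of_forall fun ω => gaussianPDFReal_nonneg _ _ _)).symm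
  -- ν as a measure with density
  have hν_eq : ν = (volume : Measure ℝ).withDensity (fun x => ENNReal.ofReal (gr x)) := by
    ext s hs
    rw [hν, Measure.bind_apply hs hker.aemeasurable, withDensity_apply _ hs]
    calc ∫⁻ ω, gaussianReal (b ω) v s ∂P
        = ∫⁻ ω, (∫⁻ x in s, gaussianPDF (b ω) v x) ∂P := by
          refine lintegral_congr fun ω => gaussianReal_apply _ hv0 s
    _ = ∫⁻ x in s, (∫⁻ ω, gaussianPDF (b ω) v x ∂P) := by
          refine lintegral_lintegral_swap ?_
          exact hGm.ennreal_ofReal.aemeasurable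
    _ = ∫⁻ x in s, ENNReal.ofReal (gr x) := by
          refine lintegral_congr fun x => hgE x
  -- ν is a finite measure
  have hν_fin : IsFiniteMeasure ν := by
    constructor
    rw [hν, Measure.bind_apply MeasurableSet.univ hker.aemeasurable]
    simp
  haveI := hν_fin
  -- absolute continuity
  have hμvol : μ ≪ volume := gaussianReal_absolutelyContinuous a hv0
  have hac : μ ≪ ν := by
    refine Measure.AbsolutelyContinuous.mk fun s hs h0 => ?_
    rw [hν_eq, withDensity_apply _ hs] at h0
    rw [lintegral_eq_zero_iff (hgr_sm.measurable.ennreal_ofReal)] at h0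
    have hFalse : ∀ᵐ x ∂(volume.restrict s), False := by
      filter_upwards [h0] with x hx
      simp only [Pi.zero_apply, ENNReal.ofReal_eq_zero] at hx
      exact absurd hx (not_le.mpr (hgr_pos x))
    rw [Filter.eventually_false_iff_eq_bot, ae_eq_bot, Measure.restrict_eq_zero] at hFalse
    exact hμvol hFalse
  -- Radon–Nikodym derivative of μ with respect to ν
  haveI : SigmaFinite ν := inferInstance
  have hgE_meas : Measurable fun x => ENNReal.ofReal (gr x) := hgr_sm.measurable.ennreal_ofReal
  have hrn1 : μ.rnDeriv volume =ᵐ[volume] fun x => ENNReal.ofReal (gaussianPDFReal a v x) := by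
    rw [hμ, gauss_withDensity a hv0]
    exact Measure.rnDeriv_withDensity volume (measurable_gaussianPDFReal a v).ennreal_ofReal
  have hrn2 : μ.rnDeriv ν =ᵐ[volume] fun x => (ENNReal.ofReal (gr x))⁻¹ * μ.rnDeriv volume x := by
    rw [hν_eq]
    exact Measure.rnDeriv_withDensity_right μ volume hgE_meas.aemeasurable
      (Filter.Eventually.of_forall fun x => ne_of_gt (ENNReal.ofReal_pos.mpr (hgr_pos x)))
      (Filter.Eventually.of_forall fun x => ENNReal.ofReal_ne_top)
  have hrnμ : μ.rnDeriv ν =ᵐ[μ]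
      fun x => (ENNReal.ofReal (gr x))⁻¹ * ENNReal.ofReal (gaussianPDFReal a v x) := by
    refine hμvol.ae_eq ?_
    filter_upwards [hrn1, hrn2] with x h1 h2
    rw [h2, h1]
  -- the log-likelihood ratio
  set L : ℝ → ℝ := fun x => Real.log (gaussianPDFReal a v x) - Real.log (gr x) with hL
  have hllr : llr μ ν =ᵐ[μ] L := by
    filter_upwards [hrnμ] with x hx
    rw [llr_def]
    simp only
    rw [hx, ENNReal.toReal_mul, ENNReal.toReal_inv,
      ENNReal.toReal_ofReal (hgr_pos x).le,
      ENNReal.toReal_ofReal (gaussianPDFReal_nonneg a v x),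
      Real.log_mul (inv_ne_zero (hgr_pos x).ne') (gaussianPDFReal_pos a v x hv0).ne',
      Real.log_inv, hL]
    ring
  -- integrability facts over P
  have hxb : ∀ x : ℝ, Integrable (fun ω => (x - b ω) ^ 2) P := by
    intro x
    refine Integrable.mono' ((hint.const_mul 2).add (integrable_const (2 * (x - a) ^ 2)))
      ((measurable_const.sub hb).pow_const 2).aestronglyMeasurable
      (Filter.Eventually.of_forall fun ω => ?_)
    simp only [Pi.add_apply]
    rw [Real.norm_eq_abs, abs_of_nonneg (sq_nonneg _)]
    nlinarith [sq_nonneg ((x - a) - (a - b ω))]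
  have hab_int : Integrable (fun ω => a - b ω) P := by
    refine Integrable.mono' (hint.add (integrable_const 1))
      ((measurable_const.sub hb)).aestronglyMeasurable
      (Filter.Eventually.of_forall fun ω => ?_)
    simp only [Pi.add_apply]
    rw [Real.norm_eq_abs]
    nlinarith [abs_nonneg (a - b ω), sq_abs (a - b ω), sq_nonneg (|a - b ω| - 1)]
  have hlog_int : ∀ x : ℝ, Integrable (fun ω => Real.log (gaussianPDFReal (b ω) v x)) P := by
    intro x
    refine (((integrable_const (-Real.log (√(2 * π * v)))).sub ((hxb x).div_const (2*(v:ℝ)))).congr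
      (Filter.Eventually.of_forall fun ω => ?_))
    simp only [Pi.sub_apply]
    exact (log_gaussianPDFReal _ _ hv0).symm
  -- Jensen step
  have hJ : ∀ x : ℝ, ∫ ω, Real.log (gaussianPDFReal (b ω) v x) ∂P ≤ Real.log (gr x) := by
    intro x
    have hstep : ∀ ω, Real.log (gaussianPDFReal (b ω) v x)
        ≤ gaussianPDFReal (b ω) v x / gr x - 1 + Real.log (gr x) := by
      intro ω
      have hp := gaussianPDFReal_pos (b ω) v x hv0
      have hg := hgr_pos x
      have h1 : Real.log (gaussianPDFReal (b ω) v x / gr x)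
          ≤ gaussianPDFReal (b ω) v x / gr x - 1 :=
        Real.log_le_sub_one_of_pos (div_pos hp hg)
      rw [Real.log_div hp.ne' hg.ne'] at h1
      linarith
    have hRint1 : Integrable (fun ω => gaussianPDFReal (b ω) v x / gr x) P :=
      (hGint x).div_const _
    have hRint2 : Integrable (fun ω => gaussianPDFReal (b ω) v x / gr x - 1) P := by
      exact hRint1.sub (integrable_const 1)
    have hRint : Integrable (fun ω => gaussianPDFReal (b ω) v x / gr x - 1 + Real.log (gr x)) P := by
      exact hRint2.add (integrable_const _)
    calc ∫ ω, Real.log (gaussianPDFReal (b ω) v x) ∂P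
        ≤ ∫ ω, (gaussianPDFReal (b ω) v x / gr x - 1 + Real.log (gr x)) ∂P :=
          integral_mono (hlog_int x) hRint hstep
    _ = (∫ ω, gaussianPDFReal (b ω) v x ∂P) / gr x - 1 + Real.log (gr x) := by
          rw [integral_add hRint2 (integrable_const _),
            integral_sub hRint1 (integrable_const 1), integral_div,
            integral_const, integral_const]
          simp [measure_univ]
    _ = Real.log (gr x) := by
          have : (∫ ω, gaussianPDFReal (b ω) v x ∂P) = gr x := rfl
          rw [this, div_self (hgr_pos x).ne']
          ring
  -- the constants
  set C : ℝ := ∫ ω, (a - b ω) ^ 2 ∂P with hC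
  set E1 : ℝ := ∫ ω, (a - b ω) ∂P with hE1
  set U : ℝ → ℝ := fun x => (C + (x - a) * (2 * E1)) / (2 * (v:ℝ)) with hU
  have hSlog : ∀ x : ℝ, ∫ ω, Real.log (gaussianPDFReal (b ω) v x) ∂P
      = -Real.log (√(2 * π * v)) - (∫ ω, (x - b ω) ^ 2 ∂P) / (2*(v:ℝ)) := by
    intro x
    rw [integral_congr_ae (Filter.Eventually.of_forall
      fun ω => log_gaussianPDFReal (b ω) x hv0),
      integral_sub (integrable_const _) ((hxb x).div_const _), integral_const, integral_div]
    simp [measure_univ]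
  have hS : ∀ x : ℝ, ∫ ω, (x - b ω) ^ 2 ∂P = C + (x - a) * (2 * E1) + (x - a) ^ 2 := by
    intro x
    have heq : (fun ω => (x - b ω) ^ 2)
        = fun ω => ((a - b ω) ^ 2 + (2 * (x - a)) * (a - b ω)) + (x - a) ^ 2 := by
      funext ω; ring
    have hm1 : Integrable (fun ω => (2 * (x - a)) * (a - b ω)) P := hab_int.const_mul _
    have hm2 : Integrable (fun ω => (a - b ω) ^ 2 + (2 * (x - a)) * (a - b ω)) P := by
      exact hint.add hm1
    rw [heq, integral_add hm2 (integrable_const _),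
      integral_add hint hm1, integral_const, integral_const_mul]
    simp only [measure_univ, ENNReal.toReal_one, one_smul, hC, hE1, probReal_univ]
    ring
  -- upper bound for L
  have hLU : ∀ x, L x ≤ U x := by
    intro x
    calc L x ≤ Real.log (gaussianPDFReal a v x)
        - ∫ ω, Real.log (gaussianPDFReal (b ω) v x) ∂P := sub_le_sub_left (hJ x) _
    _ = U x := by
        rw [log_gaussianPDFReal a x hv0, hSlog x, hS x, hU]
        field_simp
        ring
  -- lower bound for L
  set Lo : ℝ → ℝ := fun x => -((x - a) ^ 2 / (2*(v:ℝ))) with hLo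
  have hLoL : ∀ x, Lo x ≤ L x := by
    intro x
    have h1 : Real.log (gr x) ≤ Real.log ((√(2 * π * v))⁻¹) :=
      Real.log_le_log (hgr_pos x) (hgr_le x)
    rw [Real.log_inv] at h1
    have h2 := log_gaussianPDFReal a x hv0
    simp only [hL, hLo]
    rw [h2]
    linarith
  -- integrability over μ
  have hLo_int : Integrable Lo μ := (((integrable_sub_sq_gaussian a hv0).div_const _)).neg
  have hU_int : Integrable U μ :=
    ((integrable_const C).add ((integrable_sub_gaussian a hv0).mul_const _)).div_const _
  have hL_meas : AEStronglyMeasurable L μ :=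
    ((Real.measurable_log.comp (measurable_gaussianPDFReal a v)).sub
      (Real.measurable_log.comp hgr_sm.measurable)).aestronglyMeasurable
  have hL_int : Integrable L μ := by
    refine Integrable.mono' ((hLo_int.abs).add (hU_int.abs)) hL_meas
      (Filter.Eventually.of_forall fun x => ?_)
    simp only [Pi.add_apply]
    rw [Real.norm_eq_abs, abs_le]
    constructor
    · have h1 := hLoL x
      have h2 := neg_abs_le (Lo x)
      have h3 := abs_nonneg (U x)
      linarith
    · have h1 := hLU x
      have h2 := le_abs_self (U x)
      have h3 := abs_nonneg (Lo x)
      linarith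
  have hllr_int : Integrable (llr μ ν) μ := hL_int.congr hllr.symm
  -- conclusion
  unfold klDiv
  rw [if_pos ⟨hac, hllr_int⟩]
  apply ENNReal.ofReal_le_ofReal
  have h1 : ∫ x, llr μ ν x ∂μ = ∫ x, L x ∂μ := integral_congr_ae hllr
  have h2 : ∫ x, L x ∂μ ≤ ∫ x, U x ∂μ :=
    integral_mono hL_int hU_int hLU
  have h3 : ∫ x, U x ∂μ = C / (2*(v:ℝ)) := by
    have hm1 : Integrable (fun x : ℝ => (x - a) * (2 * E1)) μ :=
      (integrable_sub_gaussian a hv0).mul_const _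
    rw [hU]
    simp only
    rw [integral_div, integral_add (integrable_const C) hm1, integral_const,
      integral_mul_const, integral_sub_gaussian a hv0]
    simp [measure_univ]
  have h4 : ∫ ω, (a - b ω) ^ 2 / (2*(v:ℝ)) ∂P = C / (2*(v:ℝ)) := by
    rw [hC, integral_div]
  rw [h1, h4]
  rw [h3] at h2
  exact h2
end

section
/- Let X be a measurable space, T ≥ 1, and let μ₀ be a probability measure on X. Let (κ_t)_{t=1}^T and (η_t)_{t=1}^T be Markov kernels from X to X, and let Q and Q̂ be the joint laws on X^{T+1} of the time-inhomogeneous Markov chains with common initial distribution μ₀ and transition kernels (κ_t) and (η_t), respectively. Then D_KL(Q ‖ Q̂) ≤ Σ_{t=1}^T sup_{z ∈ X} D_KL( κ_t(z) ‖ η_t(z) ), with the convention that both sides take values in the extended nonnegative reals. -/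
open MeasureTheory ProbabilityTheory
open scoped ENNReal ProbabilityTheory Classical

/-- The joint law on `X^{T+1}` of the time-inhomogeneous Markov chain with initial
distribution `μ` and transition kernels `κ 0, κ 1, …, κ (T-1)` (the kernel `κ t` maps
the state at time `t` to the state at time `t+1`), obtained by iterated
composition-products `μ ⊗ κ 0 ⊗ ⋯ ⊗ κ (T-1)`. -/
noncomputable def chainLaw {X : Type*} [MeasurableSpace X] (μ : Measure X)
    (κ : ℕ → Kernel X X) : (T : ℕ) → Measure (Fin (T + 1) → X)
  | 0 => μ.map fun x _ => x
  | T + 1 =>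
      (chainLaw μ κ T ⊗ₘ (κ T).comap (fun f => f (Fin.last T)) (measurable_pi_apply _)).map
        fun p => Fin.snoc p.1 p.2

namespace KLChainAux

open Real Set Filter

variable {α β : Type*} [MeasurableSpace α] [MeasurableSpace β]

/-! ### Pointwise lemmas -/

lemma mul_ofReal_neg_log_le (u : ℝ≥0∞) :
    u * ENNReal.ofReal (-Real.log u.toReal) ≤ ENNReal.ofReal (Real.exp (-1)) := by
  by_cases hu : u = ∞
  · simp [hu]
  rcases eq_or_ne u 0 with hu0 | hu0
  · simp [hu0]
  have ht : 0 < u.toReal := ENNReal.toReal_pos hu0 hu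
  set t := u.toReal with htdef
  rcases le_or_gt 1 t with h1 | h1
  · have : -Real.log t ≤ 0 := by
      simp only [neg_nonpos]
      exact Real.log_nonneg h1
    rw [ENNReal.ofReal_of_nonpos this]
    simp
  · -- 0 < t < 1
    have hlog : -Real.log t ≤ (t * Real.exp 1)⁻¹ := by
      have h := Real.log_le_sub_one_of_pos (x := (t * Real.exp 1)⁻¹)
        (by positivity)
      have hrw : Real.log ((t * Real.exp 1)⁻¹) = -Real.log t - 1 := by
        rw [Real.log_inv, Real.log_mul (ne_of_gt ht) (Real.exp_ne_zero 1), Real.log_exp]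
        ring
      rw [hrw] at h
      linarith
    have hmul : t * (-Real.log t) ≤ Real.exp (-1) := by
      have := mul_le_mul_of_nonneg_left hlog (le_of_lt ht)
      have heq : t * (t * Real.exp 1)⁻¹ = (Real.exp 1)⁻¹ := by
        field_simp
      rw [heq] at this
      rw [Real.exp_neg]
      exact this
    have hu_eq : u = ENNReal.ofReal t := (ENNReal.ofReal_toReal hu).symm
    rw [hu_eq, ← ENNReal.ofReal_mul (le_of_lt ht)]
    exact ENNReal.ofReal_le_ofReal hmul

lemma ofReal_log_toReal_le (u : ℝ≥0∞) :
    ENNReal.ofReal (Real.log u.toReal) ≤ u := by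
  by_cases hu : u = ∞
  · simp [hu]
  rcases eq_or_ne u.toReal 0 with h0 | h0
  · simp [h0]
  have ht : 0 < u.toReal := lt_of_le_of_ne ENNReal.toReal_nonneg (Ne.symm h0)
  have hlog : Real.log u.toReal ≤ u.toReal := by
    have := Real.log_le_sub_one_of_pos ht
    linarith
  calc ENNReal.ofReal (Real.log u.toReal) ≤ ENNReal.ofReal u.toReal :=
        ENNReal.ofReal_le_ofReal hlog
    _ = u := ENNReal.ofReal_toReal hu

/-! ### Negative part bound -/

lemma lintegral_ofReal_neg_log_withDensity (ν : Measure β) [IsProbabilityMeasure ν]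
    {w : β → ℝ≥0∞} (hw : Measurable w) :
    ∫⁻ b, ENNReal.ofReal (-Real.log (w b).toReal) ∂(ν.withDensity w)
      ≤ ENNReal.ofReal (Real.exp (-1)) := by
  rw [lintegral_withDensity_eq_lintegral_mul ν hw
    (by exact (ENNReal.measurable_ofReal.comp (hw.ennreal_toReal.log.neg)))]
  calc ∫⁻ b, (w * fun b => ENNReal.ofReal (-Real.log (w b).toReal)) b ∂ν
      ≤ ∫⁻ _, ENNReal.ofReal (Real.exp (-1)) ∂ν :=
        lintegral_mono fun b => mul_ofReal_neg_log_le (w b)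
    _ = ENNReal.ofReal (Real.exp (-1)) := by simp

lemma lintegral_ofReal_neg_llr_le (μ ν : Measure β) [IsProbabilityMeasure μ]
    [IsProbabilityMeasure ν] (hac : μ ≪ ν) :
    ∫⁻ b, ENNReal.ofReal (-llr μ ν b) ∂μ ≤ ENNReal.ofReal (Real.exp (-1)) := by
  have h := lintegral_ofReal_neg_log_withDensity (ν := ν) (Measure.measurable_rnDeriv μ ν)
  rw [Measure.withDensity_rnDeriv_eq μ ν hac] at h
  simpa [llr_def] using h

lemma lintegral_div_rnDeriv_le (μ ν : Measure β) [IsProbabilityMeasure μ]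
    [IsProbabilityMeasure ν] (hac : μ ≪ ν) {G : β → ℝ≥0∞} (hG : Measurable G)
    (hG1 : ∫⁻ b, G b ∂ν ≤ 1) :
    ∫⁻ b, G b / μ.rnDeriv ν b ∂μ ≤ 1 := by
  have h := lintegral_withDensity_eq_lintegral_mul ν (Measure.measurable_rnDeriv μ ν)
    (hG.div (Measure.measurable_rnDeriv μ ν))
  rw [Measure.withDensity_rnDeriv_eq μ ν hac] at h
  rw [show (∫⁻ b, G b / μ.rnDeriv ν b ∂μ) = _ from h]
  refine le_trans (lintegral_mono fun b => ?_) hG1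
  exact ENNReal.mul_div_le

/-! ### Extraction from `klDiv ≤ C` -/

lemma of_klDiv_le {μ ν : Measure α} {C : ℝ≥0∞} (hC : klDiv μ ν ≤ C) (hCtop : C ≠ ∞) :
    μ ≪ ν ∧ Integrable (llr μ ν) μ ∧ ∫ x, llr μ ν x ∂μ ≤ C.toReal := by
  by_cases h : μ ≪ ν ∧ Integrable (llr μ ν) μ
  · refine ⟨h.1, h.2, ?_⟩
    rw [klDiv, if_pos h] at hC
    rcases le_or_gt (∫ x, llr μ ν x ∂μ) 0 with h0 | h0
    · exact h0.trans ENNReal.toReal_nonneg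
    · calc ∫ x, llr μ ν x ∂μ = (ENNReal.ofReal (∫ x, llr μ ν x ∂μ)).toReal := by
            rw [ENNReal.toReal_ofReal h0.le]
        _ ≤ C.toReal := ENNReal.toReal_mono hCtop hC
  · rw [klDiv, if_neg h] at hC
    exact absurd (top_le_iff.mp hC) hCtop

/-! ### Bound on `∫⁻ (llr)⁺` -/

lemma lintegral_ofReal_llr_le {μ ν : Measure β} [IsProbabilityMeasure μ]
    [IsProbabilityMeasure ν] (hac : μ ≪ ν) (hint : Integrable (llr μ ν) μ)
    {c : ℝ} (hI : ∫ b, llr μ ν b ∂μ ≤ c) :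
    ∫⁻ b, ENNReal.ofReal (llr μ ν b) ∂μ ≤ ENNReal.ofReal (c + Real.exp (-1)) := by
  have hneg : ∫⁻ b, ENNReal.ofReal (-llr μ ν b) ∂μ ≤ ENNReal.ofReal (Real.exp (-1)) :=
    lintegral_ofReal_neg_llr_le μ ν hac
  have hnegint : Integrable (fun b => max (-llr μ ν b) 0) μ := hint.neg.pos_part
  have hmax_nn : 0 ≤ᵐ[μ] (fun b => max (-llr μ ν b) 0) :=
    Filter.Eventually.of_forall fun b => le_max_right _ _
  have hnegval : ∫ b, max (-llr μ ν b) 0 ∂μ ≤ Real.exp (-1) := by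
    rw [integral_eq_lintegral_of_nonneg_ae hmax_nn hnegint.aestronglyMeasurable]
    have heq : ∀ b, ENNReal.ofReal (max (-llr μ ν b) 0) = ENNReal.ofReal (-llr μ ν b) := by
      intro b
      rcases le_total (-llr μ ν b) 0 with h | h
      · rw [max_eq_right h, ENNReal.ofReal_of_nonpos h]; simp
      · rw [max_eq_left h]
    simp_rw [heq]
    calc (∫⁻ b, ENNReal.ofReal (-llr μ ν b) ∂μ).toReal
        ≤ (ENNReal.ofReal (Real.exp (-1))).toReal :=
          ENNReal.toReal_mono ENNReal.ofReal_ne_top hneg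
      _ = Real.exp (-1) := ENNReal.toReal_ofReal (Real.exp_nonneg _)
  have hposeq : ∀ b, ENNReal.ofReal (llr μ ν b) = ENNReal.ofReal (max (llr μ ν b) 0) := by
    intro b
    rcases le_total (llr μ ν b) 0 with h | h
    · rw [ENNReal.ofReal_of_nonpos h, max_eq_right h]; simp
    · rw [max_eq_left h]
  simp_rw [hposeq]
  have hpos_nn : 0 ≤ᵐ[μ] (fun b => max (llr μ ν b) 0) :=
    Filter.Eventually.of_forall fun b => le_max_right _ _
  rw [← ofReal_integral_eq_lintegral_ofReal hint.pos_part hpos_nn]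
  apply ENNReal.ofReal_le_ofReal
  have hdecomp : ∀ b, max (llr μ ν b) 0 = llr μ ν b + max (-llr μ ν b) 0 := by
    intro b
    rcases le_total (llr μ ν b) 0 with h | h
    · rw [max_eq_right h, max_eq_left (by linarith)]; ring
    · rw [max_eq_left h, max_eq_right (by linarith)]; ring
  simp_rw [hdecomp]
  rw [integral_add hint hnegint]
  linarith

/-! ### Positive part fiber bound -/

lemma fiber_pos_bound {μ ν : Measure β} [IsProbabilityMeasure μ] [IsProbabilityMeasure ν]
    (hac : μ ≪ ν) (hint : Integrable (llr μ ν) μ) {c : ℝ} (hI : ∫ b, llr μ ν b ∂μ ≤ c)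
    {G : β → ℝ≥0∞} (hG : Measurable G) (hG1 : ∫⁻ b, G b ∂ν ≤ 1) :
    ∫⁻ b, ENNReal.ofReal (Real.log (G b).toReal) ∂μ
      ≤ ENNReal.ofReal (c + Real.exp (-1)) + 1 := by
  set r := μ.rnDeriv ν with hrdef
  have hrm : Measurable r := Measure.measurable_rnDeriv μ ν
  have hrpos : ∀ᵐ b ∂μ, 0 < r b := Measure.rnDeriv_pos hac
  have hrfin : ∀ᵐ b ∂μ, r b ≠ ∞ := hac (Measure.rnDeriv_ne_top μ ν)
  have hpt : ∀ᵐ b ∂μ, ENNReal.ofReal (Real.log (G b).toReal)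
      ≤ ENNReal.ofReal (llr μ ν b) + ENNReal.ofReal (Real.log ((G b / r b).toReal)) := by
    filter_upwards [hrpos, hrfin] with b hb1 hb2
    by_cases hG0 : G b = 0
    · simp [hG0]
    by_cases hGtop : G b = ∞
    · simp [hGtop]
    have ht : 0 < (G b).toReal := ENNReal.toReal_pos hG0 hGtop
    have hs : 0 < (r b).toReal := ENNReal.toReal_pos hb1.ne' hb2
    have hdiv : (G b / r b).toReal = (G b).toReal / (r b).toReal := ENNReal.toReal_div _ _
    have hlogeq : Real.log (G b).toReal
        = llr μ ν b + Real.log ((G b / r b).toReal) := by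
      rw [hdiv, Real.log_div (ne_of_gt ht) (ne_of_gt hs), llr_def]
      ring
    rw [hlogeq]
    exact ENNReal.ofReal_add_le
  calc ∫⁻ b, ENNReal.ofReal (Real.log (G b).toReal) ∂μ
      ≤ ∫⁻ b, (ENNReal.ofReal (llr μ ν b)
          + ENNReal.ofReal (Real.log ((G b / r b).toReal))) ∂μ := lintegral_mono_ae hpt
    _ = ∫⁻ b, ENNReal.ofReal (llr μ ν b) ∂μ
          + ∫⁻ b, ENNReal.ofReal (Real.log ((G b / r b).toReal)) ∂μ := by
        rw [lintegral_add_left (by exact ENNReal.measurable_ofReal.comp (measurable_llr μ ν))]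
    _ ≤ ENNReal.ofReal (c + Real.exp (-1)) + 1 := by
        gcongr
        · exact lintegral_ofReal_llr_le hac hint hI
        · calc ∫⁻ b, ENNReal.ofReal (Real.log ((G b / r b).toReal)) ∂μ
              ≤ ∫⁻ b, G b / r b ∂μ := lintegral_mono fun b => ofReal_log_toReal_le _
            _ ≤ 1 := lintegral_div_rnDeriv_le μ ν hac hG hG1

/-! ### Fiber Gibbs inequality -/

lemma fiber_gibbs {μ ν : Measure β} [IsProbabilityMeasure μ] [IsProbabilityMeasure ν]
    (hac : μ ≪ ν) (hint : Integrable (llr μ ν) μ)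
    {G : β → ℝ≥0∞} (hG : Measurable G) (hG1 : ∫⁻ b, G b ∂ν ≤ 1)
    (hGae : ∀ᵐ b ∂μ, 0 < G b ∧ G b ≠ ∞)
    (hLint : Integrable (fun b => Real.log (G b).toReal) μ) :
    ∫ b, Real.log (G b).toReal ∂μ ≤ ∫ b, llr μ ν b ∂μ := by
  set r := μ.rnDeriv ν with hrdef
  have hrm : Measurable r := Measure.measurable_rnDeriv μ ν
  have hrpos : ∀ᵐ b ∂μ, 0 < r b := Measure.rnDeriv_pos hac
  have hrfin : ∀ᵐ b ∂μ, r b ≠ ∞ := hac (Measure.rnDeriv_ne_top μ ν)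
  set ρ : β → ℝ := fun b => (G b / r b).toReal with hρdef
  have hρm : Measurable ρ := (hG.div hrm).ennreal_toReal
  have hρnn : 0 ≤ᵐ[μ] ρ := Eventually.of_forall fun b => ENNReal.toReal_nonneg
  have hρl : ∫⁻ b, ENNReal.ofReal (ρ b) ∂μ ≤ 1 := by
    calc ∫⁻ b, ENNReal.ofReal (ρ b) ∂μ ≤ ∫⁻ b, G b / r b ∂μ :=
          lintegral_mono fun b => ENNReal.ofReal_toReal_le
      _ ≤ 1 := lintegral_div_rnDeriv_le μ ν hac hG hG1
  have hρint : Integrable ρ μ := by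
    refine ⟨hρm.aestronglyMeasurable, ?_⟩
    rw [hasFiniteIntegral_iff_ofReal hρnn]
    exact lt_of_le_of_lt hρl ENNReal.one_lt_top
  have hsub : (fun b => Real.log (G b).toReal - llr μ ν b) ≤ᵐ[μ] fun b => ρ b - 1 := by
    filter_upwards [hrpos, hrfin, hGae] with b hb1 hb2 hb3
    have ht : 0 < (G b).toReal := ENNReal.toReal_pos hb3.1.ne' hb3.2
    have hs : 0 < (r b).toReal := ENNReal.toReal_pos hb1.ne' hb2
    have hdiv : ρ b = (G b).toReal / (r b).toReal := ENNReal.toReal_div _ _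
    have : Real.log (G b).toReal - llr μ ν b = Real.log (ρ b) := by
      rw [hdiv, Real.log_div (ne_of_gt ht) (ne_of_gt hs), llr_def]
    rw [this]
    have hρpos : 0 < ρ b := by rw [hdiv]; positivity
    have := Real.log_le_sub_one_of_pos hρpos
    linarith
  have hρval : ∫ b, ρ b ∂μ ≤ 1 := by
    rw [integral_eq_lintegral_of_nonneg_ae hρnn hρm.aestronglyMeasurable]
    calc (∫⁻ b, ENNReal.ofReal (ρ b) ∂μ).toReal ≤ (1 : ℝ≥0∞).toReal :=
          ENNReal.toReal_mono ENNReal.one_ne_top hρl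
      _ = 1 := by simp
  have hmain : ∫ b, (Real.log (G b).toReal - llr μ ν b) ∂μ ≤ ∫ b, (ρ b - 1) ∂μ :=
    integral_mono_ae (hLint.sub hint) (hρint.sub (integrable_const 1)) hsub
  rw [integral_sub hLint hint, integral_sub hρint (integrable_const 1)] at hmain
  simp only [integral_const, measure_univ, ENNReal.toReal_one, probReal_univ, smul_eq_mul, one_mul] at hmain
  linarith

/-! ### compProd with a density -/

lemma compProd_withDensity_fst {P Pb : Measure α} [SFinite P] [SFinite Pb]
    (η : Kernel α β) [IsSFiniteKernel η] {f : α → ℝ≥0∞} (hf : Measurable f)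
    (hPf : Pb.withDensity f = P) :
    P ⊗ₘ η = (Pb ⊗ₘ η).withDensity (fun p => f p.1) := by
  ext s hs
  have hmeas : Measurable (s.indicator fun p : α × β => f p.1) :=
    (hf.comp measurable_fst).indicator hs
  rw [Measure.compProd_apply hs, withDensity_apply _ hs, ← lintegral_indicator hs,
    Measure.lintegral_compProd hmeas]
  conv_lhs => rw [← hPf]
  rw [lintegral_withDensity_eq_lintegral_mul Pb hf (Kernel.measurable_kernel_prodMk_left hs)]
  refine lintegral_congr fun a => ?_
  have : ∀ b, s.indicator (fun p : α × β => f p.1) (a, b)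
      = (Prod.mk a ⁻¹' s).indicator (fun _ => f a) b := by
    intro b
    simp only [Set.indicator_apply, Set.mem_preimage]
  simp_rw [this]
  rw [lintegral_indicator_const (measurable_prodMk_left hs)]
  rfl

/-! ### Marginal bound on the rnDeriv -/

lemma marginal_rnDeriv_le_one {P : Measure α} [IsProbabilityMeasure P]
    {κ η : Kernel α β} [IsMarkovKernel κ] [IsMarkovKernel η]
    (hQR : P ⊗ₘ κ ≪ P ⊗ₘ η) :
    ∀ᵐ a ∂P, ∫⁻ b, (P ⊗ₘ κ).rnDeriv (P ⊗ₘ η) (a, b) ∂(η a) ≤ 1 := by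
  have hgm : Measurable ((P ⊗ₘ κ).rnDeriv (P ⊗ₘ η)) := Measure.measurable_rnDeriv _ _
  have hm : Measurable fun a => ∫⁻ b, (P ⊗ₘ κ).rnDeriv (P ⊗ₘ η) (a, b) ∂(η a) := by
    exact Measurable.lintegral_kernel_prod_right (κ := η)
      (f := fun a b => (P ⊗ₘ κ).rnDeriv (P ⊗ₘ η) (a, b)) (by exact hgm)
  refine ae_le_of_forall_setLIntegral_le_of_sigmaFinite hm fun s hs _ => ?_
  have h1 : ∫⁻ a in s, ∫⁻ b, (P ⊗ₘ κ).rnDeriv (P ⊗ₘ η) (a, b) ∂(η a) ∂P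
      = (P ⊗ₘ κ) (s ×ˢ Set.univ) := by
    rw [← Measure.setLIntegral_rnDeriv hQR (s ×ˢ Set.univ),
      Measure.setLIntegral_compProd hgm hs MeasurableSet.univ]
    simp [Measure.restrict_univ]
  rw [h1, Measure.compProd_apply_prod hs MeasurableSet.univ]
  simp only [measure_univ, setLIntegral_one]
  simp

/-! ### Main compProd inequality -/

theorem klDiv_compProd_le (P Pb : Measure α) [IsProbabilityMeasure P] [IsProbabilityMeasure Pb]
    (κ η : Kernel α β) [IsMarkovKernel κ] [IsMarkovKernel η]
    (C : ℝ≥0∞) (hC : ∀ a, klDiv (κ a) (η a) ≤ C) :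
    klDiv (P ⊗ₘ κ) (Pb ⊗ₘ η) ≤ klDiv P Pb + C := by
  by_cases hCtop : C = ∞
  · simp [hCtop]
  by_cases hP : klDiv P Pb = ∞
  · simp [hP]
  -- extract facts about the initial measures
  have hPfacts : P ≪ Pb ∧ Integrable (llr P Pb) P := by
    by_contra h
    rw [klDiv, if_neg h] at hP
    exact hP rfl
  obtain ⟨hPac, hPint⟩ := hPfacts
  -- extract facts about the kernels
  have hker : ∀ a, κ a ≪ η a ∧ Integrable (llr (κ a) (η a)) (κ a)
      ∧ ∫ b, llr (κ a) (η a) b ∂(κ a) ≤ C.toReal := fun a => of_klDiv_le (hC a) hCtop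
  set Q := P ⊗ₘ κ with hQdef
  set Qb := Pb ⊗ₘ η with hQbdef
  set R := P ⊗ₘ η with hRdef
  set g := Q.rnDeriv R with hgdef
  set f := P.rnDeriv Pb with hfdef
  have hgm : Measurable g := Measure.measurable_rnDeriv _ _
  have hfm : Measurable f := Measure.measurable_rnDeriv _ _
  have h1 : Q ≪ R := Measure.AbsolutelyContinuous.compProd_right
    (Eventually.of_forall fun a => (hker a).1)
  have hRQb : R = Qb.withDensity (fun p => f p.1) :=
    compProd_withDensity_fst η hfm (Measure.withDensity_rnDeriv_eq P Pb hPac)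
  have h2 : R ≪ Qb := by rw [hRQb]; exact withDensity_absolutelyContinuous _ _
  have hACQ : Q ≪ Qb := h1.trans h2
  have hQg : R.withDensity g = Q := Measure.withDensity_rnDeriv_eq _ _ h1
  have hmarg : ∀ᵐ a ∂P, ∫⁻ b, g (a, b) ∂(η a) ≤ 1 := marginal_rnDeriv_le_one h1
  have hgae : ∀ᵐ p ∂Q, 0 < g p ∧ g p ≠ ∞ :=
    (Measure.rnDeriv_pos h1).and (h1 (Measure.rnDeriv_ne_top Q R))
  have hslice : ∀ᵐ a ∂P, ∀ᵐ b ∂(κ a), 0 < g (a, b) ∧ g (a, b) ≠ ∞ :=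
    Measure.ae_ae_of_ae_compProd hgae
  set L : α × β → ℝ := fun p => Real.log (g p).toReal with hLdef
  have hLm : Measurable L := hgm.ennreal_toReal.log
  -- integrability of L
  have hLneg : ∫⁻ p, ENNReal.ofReal (-L p) ∂Q ≤ ENNReal.ofReal (Real.exp (-1)) := by
    rw [← hQg]
    exact lintegral_ofReal_neg_log_withDensity R hgm
  have hLpos : ∫⁻ p, ENNReal.ofReal (L p) ∂Q
      ≤ ENNReal.ofReal (C.toReal + Real.exp (-1)) + 1 := by
    have hmeasL : Measurable fun p : α × β => ENNReal.ofReal (L p) :=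
      ENNReal.measurable_ofReal.comp hLm
    rw [Measure.lintegral_compProd hmeasL]
    calc ∫⁻ a, ∫⁻ b, ENNReal.ofReal (L (a, b)) ∂(κ a) ∂P
        ≤ ∫⁻ _, (ENNReal.ofReal (C.toReal + Real.exp (-1)) + 1) ∂P := by
          refine lintegral_mono_ae ?_
          filter_upwards [hmarg] with a ha
          exact fiber_pos_bound (hker a).1 (hker a).2.1 (hker a).2.2
            (hgm.comp measurable_prodMk_left) ha
      _ = ENNReal.ofReal (C.toReal + Real.exp (-1)) + 1 := by simp
  have hLint : Integrable L Q := by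
    refine ⟨hLm.aestronglyMeasurable, ?_⟩
    rw [hasFiniteIntegral_iff_norm]
    have hb : ∀ p, ENNReal.ofReal ‖L p‖ ≤ ENNReal.ofReal (L p) + ENNReal.ofReal (-L p) := by
      intro p
      rcases le_total 0 (L p) with h | h
      · rw [Real.norm_eq_abs, abs_of_nonneg h]; exact le_self_add
      · rw [Real.norm_eq_abs, abs_of_nonpos h]; exact le_add_self
    calc ∫⁻ p, ENNReal.ofReal ‖L p‖ ∂Q
        ≤ ∫⁻ p, (ENNReal.ofReal (L p) + ENNReal.ofReal (-L p)) ∂Q := lintegral_mono hb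
      _ = ∫⁻ p, ENNReal.ofReal (L p) ∂Q + ∫⁻ p, ENNReal.ofReal (-L p) ∂Q :=
          lintegral_add_left (ENNReal.measurable_ofReal.comp hLm) _
      _ < ∞ := by
          apply ENNReal.add_lt_top.mpr
          constructor
          · exact lt_of_le_of_lt hLpos (by finiteness)
          · exact lt_of_le_of_lt hLneg (by finiteness)
  -- decomposition of llr Q Qb
  have hchain : Q.rnDeriv Qb =ᵐ[Q] fun p => g p * f p.1 := by
    have ha := Measure.rnDeriv_mul_rnDeriv (μ := Q) (ν := R) (κ := Qb) h1
    have hb : R.rnDeriv Qb =ᵐ[Qb] fun p => f p.1 := by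
      rw [hRQb]
      exact Measure.rnDeriv_withDensity Qb (hfm.comp measurable_fst)
    filter_upwards [hACQ ha, hACQ hb] with p hp1 hp2
    rw [← hp1]
    simp only [Pi.mul_apply]
    rw [hp2]
  have hQfst : Q.map Prod.fst = P := Measure.fst_compProd P κ
  have hfae : ∀ᵐ p ∂Q, 0 < f p.1 ∧ f p.1 ≠ ∞ := by
    have hgood : ∀ᵐ a ∂P, 0 < f a ∧ f a ≠ ∞ :=
      (Measure.rnDeriv_pos hPac).and (hPac (Measure.rnDeriv_ne_top P Pb))
    have hsm : MeasurableSet {a | ¬(0 < f a ∧ f a ≠ ∞)} := by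
      have : MeasurableSet {a | 0 < f a ∧ f a ≠ ∞} :=
        (measurableSet_lt measurable_const hfm).inter
          (hfm (measurableSet_singleton ∞)).compl
      exact this.compl
    rw [ae_iff] at hgood ⊢
    have : {p : α × β | ¬(0 < f p.1 ∧ f p.1 ≠ ∞)}
        = Prod.fst ⁻¹' {a | ¬(0 < f a ∧ f a ≠ ∞)} := rfl
    rw [this, ← Measure.map_apply measurable_fst hsm, hQfst]
    exact hgood
  have hllr_eq : llr Q Qb =ᵐ[Q] fun p => L p + llr P Pb p.1 := by
    filter_upwards [hchain, hgae, hfae] with p hp1 hp2 hp3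
    have hstart : llr Q Qb p = Real.log ((Q.rnDeriv Qb) p).toReal := rfl
    rw [hstart, hp1, ENNReal.toReal_mul,
      Real.log_mul (ENNReal.toReal_ne_zero.mpr ⟨hp2.1.ne', hp2.2⟩)
        (ENNReal.toReal_ne_zero.mpr ⟨hp3.1.ne', hp3.2⟩)]
    rfl
  have hφm : StronglyMeasurable (llr P Pb) := stronglyMeasurable_llr P Pb
  have hφfst_int : Integrable (fun p : α × β => llr P Pb p.1) Q := by
    have hPint' : Integrable (llr P Pb) (Q.map Prod.fst) := by rw [hQfst]; exact hPint
    have h := (integrable_map_measure (hφm.aestronglyMeasurable)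
      measurable_fst.aemeasurable).mp hPint'
    exact h
  have hint_llrQ : Integrable (llr Q Qb) Q :=
    (integrable_congr hllr_eq).mpr (hLint.add hφfst_int)
  have hφval : ∫ p, llr P Pb p.1 ∂Q = ∫ a, llr P Pb a ∂P := by
    have h := integral_map (μ := Q) (φ := Prod.fst) measurable_fst.aemeasurable
      (f := llr P Pb) hφm.aestronglyMeasurable
    rw [hQfst] at h
    exact h.symm
  -- the fiberwise Gibbs bound
  have hLbound : ∫ p, L p ∂Q ≤ C.toReal := by
    rw [Measure.integral_compProd hLint]
    have hfibint : ∀ᵐ a ∂P, Integrable (fun b => L (a, b)) (κ a) :=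
      ((Measure.integrable_compProd_iff hLint.aestronglyMeasurable).mp hLint).1
    have hfiber : ∀ᵐ a ∂P, ∫ b, L (a, b) ∂(κ a) ≤ C.toReal := by
      filter_upwards [hmarg, hslice, hfibint] with a ha1 ha2 ha3
      calc ∫ b, L (a, b) ∂(κ a) ≤ ∫ b, llr (κ a) (η a) b ∂(κ a) :=
            fiber_gibbs (hker a).1 (hker a).2.1 (hgm.comp measurable_prodMk_left) ha1 ha2 ha3
        _ ≤ C.toReal := (hker a).2.2
    calc ∫ a, ∫ b, L (a, b) ∂(κ a) ∂P ≤ ∫ _, C.toReal ∂P :=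
          integral_mono_ae (hLint.integral_compProd) (integrable_const _) hfiber
      _ = C.toReal := by simp
  -- conclusion
  have hval : ∫ p, llr Q Qb p ∂Q = ∫ p, L p ∂Q + ∫ a, llr P Pb a ∂P := by
    rw [integral_congr_ae hllr_eq, integral_add hLint hφfst_int, hφval]
  rw [klDiv, if_pos ⟨hACQ, hint_llrQ⟩, klDiv, if_pos ⟨hPac, hPint⟩, hval]
  calc ENNReal.ofReal (∫ p, L p ∂Q + ∫ a, llr P Pb a ∂P)
      ≤ ENNReal.ofReal (∫ a, llr P Pb a ∂P) + ENNReal.ofReal (∫ p, L p ∂Q) := by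
        rw [add_comm (∫ p, L p ∂Q)]
        exact ENNReal.ofReal_add_le
    _ ≤ ENNReal.ofReal (∫ a, llr P Pb a ∂P) + C := by
        gcongr
        calc ENNReal.ofReal (∫ p, L p ∂Q) ≤ ENNReal.ofReal C.toReal :=
              ENNReal.ofReal_le_ofReal hLbound
          _ = C := ENNReal.ofReal_toReal hCtop

/-! ### klDiv under a measurable embedding -/

lemma klDiv_map_le {F : α → β} (hF : MeasurableEmbedding F)
    (μ ν : Measure α) [IsProbabilityMeasure μ] [IsProbabilityMeasure ν] :
    klDiv (μ.map F) (ν.map F) ≤ klDiv μ ν := by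
  by_cases h : μ ≪ ν ∧ Integrable (llr μ ν) μ
  swap
  · have : klDiv μ ν = ∞ := by rw [klDiv, if_neg h]
    rw [this]; exact le_top
  obtain ⟨hac, hint⟩ := h
  have hacm : μ.map F ≪ ν.map F := hF.absolutelyContinuous_map hac
  have hrd : (fun x => (μ.map F).rnDeriv (ν.map F) (F x)) =ᵐ[μ] μ.rnDeriv ν :=
    hac (hF.rnDeriv_map μ ν)
  have hllr : (fun x => llr (μ.map F) (ν.map F) (F x)) =ᵐ[μ] llr μ ν := by
    filter_upwards [hrd] with x hx
    simp only [llr_def]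
    rw [hx]
  have hintm : Integrable (llr (μ.map F) (ν.map F)) (μ.map F) := by
    rw [hF.integrable_map_iff]
    exact (integrable_congr hllr).mpr hint
  have hvalm : ∫ y, llr (μ.map F) (ν.map F) y ∂(μ.map F) = ∫ x, llr μ ν x ∂μ := by
    rw [hF.integral_map]
    exact integral_congr_ae hllr
  rw [klDiv, if_pos ⟨hacm, hintm⟩, klDiv, if_pos ⟨hac, hint⟩, hvalm]

lemma klDiv_self (μ : Measure α) [IsProbabilityMeasure μ] : klDiv μ μ = 0 := by
  have hl : llr μ μ =ᵐ[μ] 0 := by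
    filter_upwards [Measure.rnDeriv_self μ] with x hx
    simp only [llr_def, hx, Pi.zero_apply]
    simp
  have hint : Integrable (llr μ μ) μ := (integrable_congr hl).mpr (integrable_zero _ _ _)
  rw [klDiv, if_pos ⟨Measure.AbsolutelyContinuous.rfl, hint⟩, integral_congr_ae hl]
  simp

/-! ### Facts about `chainLaw` -/

lemma measurable_snocFun {X : Type*} [MeasurableSpace X] (T : ℕ) :
    Measurable (fun p : (Fin (T + 1) → X) × X => (Fin.snoc p.1 p.2 : Fin (T + 2) → X)) := by
  rw [measurable_pi_iff]
  intro i
  refine Fin.lastCases ?_ (fun j => ?_) i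
  · simp only [Fin.snoc_last]
    exact measurable_snd
  · simp only [Fin.snoc_castSucc]
    exact (measurable_pi_apply j).comp measurable_fst

lemma measurableEmbedding_snocFun {X : Type*} [MeasurableSpace X] (T : ℕ) :
    MeasurableEmbedding
      (fun p : (Fin (T + 1) → X) × X => (Fin.snoc p.1 p.2 : Fin (T + 2) → X)) := by
  have heq : (fun p : (Fin (T + 1) → X) × X => (Fin.snoc p.1 p.2 : Fin (T + 2) → X))
      = fun p => (MeasurableEquiv.piFinSuccAbove (fun _ : Fin (T + 2) => X)
          (Fin.last (T + 1))).symm (p.2, p.1) := by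
    funext p
    have : (MeasurableEquiv.piFinSuccAbove (fun _ : Fin (T + 2) => X)
        (Fin.last (T + 1))).symm (p.2, p.1)
        = Fin.insertNth (Fin.last (T + 1)) p.2 p.1 := rfl
    rw [this, Fin.insertNth_last']
  rw [heq]
  exact (MeasurableEquiv.piFinSuccAbove (fun _ : Fin (T + 2) => X)
    (Fin.last (T + 1))).symm.measurableEmbedding.comp
    (MeasurableEquiv.prodComm).measurableEmbedding

lemma chainLaw_isProb {X : Type*} [MeasurableSpace X] (μ : Measure X)
    [IsProbabilityMeasure μ] (κ : ℕ → Kernel X X) [∀ t, IsMarkovKernel (κ t)] (T : ℕ) :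
    IsProbabilityMeasure (chainLaw μ κ T) := by
  induction T with
  | zero =>
      simp only [chainLaw]
      exact Measure.isProbabilityMeasure_map
        (measurable_pi_lambda _ fun _ => measurable_id).aemeasurable
  | succ T ih =>
      simp only [chainLaw]
      haveI := ih
      exact Measure.isProbabilityMeasure_map (measurable_snocFun T).aemeasurable

end KLChainAux

/-- Telescoping bound for Markov chains with the same initial distribution:
`D_KL(Q ‖ Q̂) ≤ ∑_{t=1}^T sup_z D_KL(κ_t(z) ‖ η_t(z))`, where `Q` and `Q̂` are the joint
laws on `X^{T+1}` of the chains with common initial law `μ₀` and transition kernels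
`(κ_t)` and `(η_t)` respectively. -/
theorem klDiv_chainLaw_le_sum_iSup
    {X : Type*} [MeasurableSpace X] (T : ℕ) (hT : 1 ≤ T)
    (μ₀ : Measure X) [IsProbabilityMeasure μ₀]
    (κ η : ℕ → Kernel X X) [∀ t, IsMarkovKernel (κ t)] [∀ t, IsMarkovKernel (η t)] :
    klDiv (chainLaw μ₀ κ T) (chainLaw μ₀ η T)
      ≤ ∑ t ∈ Finset.range T, ⨆ z : X, klDiv (κ t z) (η t z) := by
  clear hT
  induction T with
  | zero =>
      simp only [Finset.range_zero, Finset.sum_empty]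
      haveI : IsProbabilityMeasure (μ₀.map (fun (x : X) (_ : Fin 1) => x)) :=
        Measure.isProbabilityMeasure_map
          (measurable_pi_lambda _ fun _ => measurable_id).aemeasurable
      have h : klDiv (μ₀.map (fun (x : X) (_ : Fin 1) => x))
          (μ₀.map (fun (x : X) (_ : Fin 1) => x)) = 0 := KLChainAux.klDiv_self _
      simp only [chainLaw]
      exact le_of_eq h
  | succ T ih =>
      haveI hQ : IsProbabilityMeasure (chainLaw μ₀ κ T) := KLChainAux.chainLaw_isProb μ₀ κ T
      haveI hQ' : IsProbabilityMeasure (chainLaw μ₀ η T) := KLChainAux.chainLaw_isProb μ₀ η T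
      simp only [chainLaw]
      calc klDiv
            ((chainLaw μ₀ κ T ⊗ₘ (κ T).comap (fun f => f (Fin.last T))
              (measurable_pi_apply _)).map
                fun p => (Fin.snoc p.1 p.2 : Fin (T + 1 + 1) → X))
            ((chainLaw μ₀ η T ⊗ₘ (η T).comap (fun f => f (Fin.last T))
              (measurable_pi_apply _)).map
                fun p => (Fin.snoc p.1 p.2 : Fin (T + 1 + 1) → X))
          ≤ klDiv
            (chainLaw μ₀ κ T ⊗ₘ (κ T).comap (fun f => f (Fin.last T)) (measurable_pi_apply _))
            (chainLaw μ₀ η T ⊗ₘ (η T).comap (fun f => f (Fin.last T)) (measurable_pi_apply _)) :=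
            KLChainAux.klDiv_map_le (KLChainAux.measurableEmbedding_snocFun T) _ _
        _ ≤ klDiv (chainLaw μ₀ κ T) (chainLaw μ₀ η T)
              + ⨆ z : X, klDiv (κ T z) (η T z) := by
            refine KLChainAux.klDiv_compProd_le _ _ _ _ _ fun p => ?_
            rw [Kernel.comap_apply, Kernel.comap_apply]
            exact le_iSup (fun z => klDiv (κ T z) (η T z)) _
        _ ≤ (∑ t ∈ Finset.range T, ⨆ z : X, klDiv (κ t z) (η t z))
              + ⨆ z : X, klDiv (κ T z) (η T z) := add_le_add_left ih _
        _ = ∑ t ∈ Finset.range (T + 1), ⨆ z : X, klDiv (κ t z) (η t z) :=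
            (Finset.sum_range_succ _ T).symm
end
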